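/- Let w ≥ 4, assume a_{w-1} = 1, and let 0 ≤ s < t be integers with 2^t ≤ w−2. Consider the (2w) × ((t−s+1)·w) block matrix over F₂ whose columns are indexed by pairs (k, j) with 0 ≤ k ≤ t−s and 1 ≤ j ≤ w, whose top block in block-column k is B^{2^{s+k}} and whose bottom block in block-column k is Q_{2^{s+k}}. This matrix has rank exactly w + 2^t − 2^s. -/

import Mathlib

open Matrix

/-- The matrix `B` of MT-type recursions: first row zero, row `i` (0-indexed,
`1 ≤ i ≤ w-2`) is the standard basis row vector with a `1` in column `i+1`,
and the last row is `(a_{w-1}, …, a_0)` (stored as `a 0, …, a (w-1)`). -/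
def mtB (w : ℕ) (a : Fin w → ZMod 2) : Matrix (Fin w) (Fin w) (ZMod 2) :=
  Matrix.of fun i j =>
    if (i : ℕ) = w - 1 then a j
    else if 1 ≤ (i : ℕ) ∧ (j : ℕ) = (i : ℕ) + 1 then 1 else 0

/-- The matrix `C`: its only nonzero entry is a `1` in position `(1,2)` (1-indexed). -/
def mtC (w : ℕ) : Matrix (Fin w) (Fin w) (ZMod 2) :=
  Matrix.of fun i j => if (i : ℕ) = 0 ∧ (j : ℕ) = 1 then 1 else 0

/-- `Q_k = Σ_{i=0}^{k-1} B^i · C · B^{k-1-i}`. -/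
def mtQ (w : ℕ) (a : Fin w → ZMod 2) (k : ℕ) : Matrix (Fin w) (Fin w) (ZMod 2) :=
  ∑ i ∈ Finset.range k, (mtB w a) ^ i * mtC w * (mtB w a) ^ (k - 1 - i)

namespace Stmt12

/-- `ℕ`-indexed standard basis vector (zero if out of range). -/
def Ee (w : ℕ) (j : ℕ) : Fin w → ZMod 2 := fun i => if (i : ℕ) = j then 1 else 0

/-- `ℕ`-indexed coefficients. -/
def Aa (w : ℕ) (a : Fin w → ZMod 2) (n : ℕ) : ZMod 2 :=
  if h : n < w then a ⟨n, h⟩ else 0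

/-- `u i = B^i e₀`. -/
def uu (w : ℕ) (a : Fin w → ZMod 2) (i : ℕ) : Fin w → ZMod 2 :=
  ((mtB w a) ^ i) *ᵥ Ee w 0

lemma addself {M : Type*} [AddCommGroup M] [Module (ZMod 2) M] (v : M) : v + v = 0 := by
  rw [← two_smul (ZMod 2) v, show (2 : ZMod 2) = 0 from rfl, zero_smul]

lemma mulVec_Ee (w : ℕ) (X : Matrix (Fin w) (Fin w) (ZMod 2)) (j : ℕ) (hj : j < w) :
    X *ᵥ Ee w j = fun i => X i ⟨j, hj⟩ := by
  funext i
  simp only [Matrix.mulVec, dotProduct, Ee]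
  rw [Finset.sum_eq_single (⟨j, hj⟩ : Fin w)]
  · simp
  · intro b _ hb
    rw [if_neg, mul_zero]
    exact fun h => hb (Fin.ext h)
  · simp

lemma col_apply (w : ℕ) (X : Matrix (Fin w) (Fin w) (ZMod 2)) (j : Fin w) :
    X *ᵥ Ee w (j : ℕ) = fun i => X i j := by
  rw [mulVec_Ee w X j j.isLt]

lemma B_step0 (w : ℕ) (a : Fin w → ZMod 2) (hw : 4 ≤ w) (ha : a ⟨0, Nat.lt_of_lt_of_le (by norm_num) hw⟩ = 1) :
    mtB w a *ᵥ Ee w 0 = Ee w (w - 1) := by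
  rw [mulVec_Ee w _ 0 (by omega)]
  funext i
  simp only [mtB, Matrix.of_apply, Ee]
  by_cases h : (i : ℕ) = w - 1
  · rw [if_pos h, if_pos h]; exact ha
  · rw [if_neg h, if_neg h, if_neg]
    rintro ⟨-, h2⟩; omega

lemma B_step1 (w : ℕ) (a : Fin w → ZMod 2) (hw : 4 ≤ w) :
    mtB w a *ᵥ Ee w 1 = Aa w a 1 • Ee w (w - 1) := by
  rw [mulVec_Ee w _ 1 (by omega)]
  funext i
  simp only [mtB, Matrix.of_apply, Ee, Pi.smul_apply, smul_eq_mul, Aa, dif_pos (show 1 < w by omega)]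
  by_cases h : (i : ℕ) = w - 1
  · rw [if_pos h, if_pos h, mul_one]
  · rw [if_neg h, if_neg h, mul_zero, if_neg]
    rintro ⟨h1, h2⟩; omega

lemma B_step2 (w : ℕ) (a : Fin w → ZMod 2) (hw : 4 ≤ w) (j : ℕ) (h1 : 1 ≤ j) (h2 : j ≤ w - 2) :
    mtB w a *ᵥ Ee w (j + 1) = Ee w j + Aa w a (j + 1) • Ee w (w - 1) := by
  rw [mulVec_Ee w _ (j+1) (by omega)]
  funext i
  simp only [mtB, Matrix.of_apply, Ee, Pi.add_apply, Pi.smul_apply, smul_eq_mul, Aa,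
    dif_pos (show j + 1 < w by omega)]
  by_cases h : (i : ℕ) = w - 1
  · rw [if_pos h, if_pos h, if_neg (by omega), mul_one, zero_add]
  · rw [if_neg h, if_neg h, mul_zero, add_zero]
    by_cases h' : (i : ℕ) = j
    · rw [if_pos ⟨by omega, by omega⟩, if_pos h']
    · rw [if_neg, if_neg h']
      rintro ⟨-, h3⟩; omega

lemma uu_zero (w : ℕ) (a : Fin w → ZMod 2) : uu w a 0 = Ee w 0 := by
  rw [uu, pow_zero, Matrix.one_mulVec]

lemma uu_succ (w : ℕ) (a : Fin w → ZMod 2) (i : ℕ) :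
    uu w a (i + 1) = mtB w a *ᵥ uu w a i := by
  rw [uu, uu, Matrix.mulVec_mulVec, ← pow_succ']

lemma uu_one (w : ℕ) (a : Fin w → ZMod 2) (hw : 4 ≤ w) (ha : a ⟨0, Nat.lt_of_lt_of_le (by norm_num) hw⟩ = 1) :
    uu w a 1 = Ee w (w - 1) := by
  rw [uu_succ, uu_zero, B_step0 w a hw ha]

lemma pow_mulVec_uu (w : ℕ) (a : Fin w → ZMod 2) (n i : ℕ) :
    (mtB w a) ^ n *ᵥ uu w a i = uu w a (n + i) := by
  rw [uu, uu, Matrix.mulVec_mulVec, ← pow_add]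

lemma B_apply_zero (w : ℕ) (a : Fin w → ZMod 2) (hw : 4 ≤ w) (x : Fin w → ZMod 2)
    (l : Fin w) (hl : (l : ℕ) = 0) : (mtB w a *ᵥ x) l = 0 := by
  simp only [Matrix.mulVec, dotProduct]
  apply Finset.sum_eq_zero
  intro j _
  simp only [mtB, Matrix.of_apply]
  rw [if_neg (by omega), if_neg (by rintro ⟨h1, -⟩; omega), zero_mul]

lemma B_apply_mid (w : ℕ) (a : Fin w → ZMod 2) (hw : 4 ≤ w) (x : Fin w → ZMod 2)
    (l l' : Fin w) (h1 : 1 ≤ (l : ℕ)) (h2 : (l' : ℕ) = (l : ℕ) + 1) :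
    (mtB w a *ᵥ x) l = x l' := by
  have hlw : (l : ℕ) ≠ w - 1 := by have := l'.isLt; omega
  simp only [Matrix.mulVec, dotProduct]
  rw [Finset.sum_eq_single l']
  · simp only [mtB, Matrix.of_apply]
    rw [if_neg hlw, if_pos ⟨h1, h2⟩, one_mul]
  · intro b _ hb
    simp only [mtB, Matrix.of_apply]
    rw [if_neg hlw, if_neg, zero_mul]
    rintro ⟨-, h3⟩
    exact hb (Fin.ext (by omega))
  · simp


lemma uu_coord (w : ℕ) (a : Fin w → ZMod 2) (hw : 4 ≤ w) (ha : a ⟨0, Nat.lt_of_lt_of_le (by norm_num) hw⟩ = 1) :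
    ∀ i, 1 ≤ i → i ≤ w - 1 → ∀ l : Fin w,
      ((l : ℕ) + i < w → uu w a i l = 0) ∧ ((l : ℕ) + i = w → uu w a i l = 1) := by
  intro i
  induction i with
  | zero => omega
  | succ i IH =>
    intro h1 h2 l
    rcases Nat.eq_or_lt_of_le h1 with h0 | h0
    · -- i + 1 = 1
      have hi : i = 0 := by omega
      subst hi
      rw [uu_one w a hw ha]
      constructor
      · intro hlt
        simp only [Ee]
        rw [if_neg (by omega)]
      · intro heq
        simp only [Ee]
        rw [if_pos (by omega)]
    · -- i ≥ 1
      have hi1 : 1 ≤ i := by omega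
      rw [uu_succ]
      constructor
      · intro hlt
        by_cases hl0 : (l : ℕ) = 0
        · exact B_apply_zero w a hw _ l hl0
        · rw [B_apply_mid w a hw _ l ⟨(l : ℕ) + 1, by omega⟩ (by omega) rfl]
          exact (IH hi1 (by omega) ⟨(l : ℕ) + 1, by omega⟩).1 (by simp; omega)
      · intro heq
        have hl1 : 1 ≤ (l : ℕ) := by omega
        rw [B_apply_mid w a hw _ l ⟨(l : ℕ) + 1, by omega⟩ hl1 rfl]
        exact (IH hi1 (by omega) ⟨(l : ℕ) + 1, by omega⟩).2 (by simp; omega)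

lemma uindep (w : ℕ) (a : Fin w → ZMod 2) (hw : 4 ≤ w) (ha : a ⟨0, Nat.lt_of_lt_of_le (by norm_num) hw⟩ = 1)
    (c : ℕ → ZMod 2) (h : ∑ i ∈ Finset.range w, c i • uu w a i = 0) :
    ∀ i < w, c i = 0 := by
  have key : ∀ l : Fin w, ∑ i ∈ Finset.range w, c i * uu w a i l = 0 := by
    intro l
    have := congrFun h l
    simpa [Finset.sum_apply] using this
  have hpos : ∀ jmax : ℕ, ∀ i, 1 ≤ i → i < w → w - jmax ≤ i → c i = 0 := by
    intro jmax
    induction jmax with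
    | zero => intro i _ h2 h3; omega
    | succ j IHj =>
      intro i h1 h2 h3
      by_cases hc : w - j ≤ i
      · exact IHj i h1 h2 hc
      · have hip : i = w - j - 1 := by omega
        have hl : w - i < w := by omega
        have := key ⟨w - i, hl⟩
        rw [Finset.sum_eq_single i] at this
        · rwa [(uu_coord w a hw ha i h1 (by omega) ⟨w - i, hl⟩).2 (by simp; omega), mul_one]
            at this
        · intro b hb hbi
          rcases Nat.eq_zero_or_pos b with hb0 | hb0
          · subst hb0
            rw [uu_zero]
            simp only [Ee]
            rw [if_neg (show ¬(w - i = 0) by omega), mul_zero]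
          · rcases lt_or_gt_of_ne hbi with hlt | hgt
            · rw [(uu_coord w a hw ha b hb0 (by simp at hb; omega) ⟨w - i, hl⟩).1
                (by simp; omega), mul_zero]
            · rw [IHj b (by omega) (by simp at hb; exact hb) (by omega), zero_mul]
        · intro hni; exact absurd (Finset.mem_range.2 h2) hni
  intro i hi
  rcases Nat.eq_zero_or_pos i with h0 | h0
  · subst h0
    have := key ⟨0, by omega⟩
    rw [Finset.sum_eq_single 0] at this
    · rw [uu_zero] at this
      simpa [Ee] using this
    · intro b hb hb0
      rw [(uu_coord w a hw ha b (by omega) (by have := Finset.mem_range.1 hb; omega)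
        ⟨0, by omega⟩).1 (by have := Finset.mem_range.1 hb; show (0:ℕ) + b < w; omega), mul_zero]
    · intro h'; exact absurd (Finset.mem_range.2 (by omega)) h'
  · exact hpos w i h0 hi (by omega)

lemma mulVec_sum (w : ℕ) (X : Matrix (Fin w) (Fin w) (ZMod 2)) {ι : Type*} (s : Finset ι)
    (f : ι → Fin w → ZMod 2) : X *ᵥ (∑ i ∈ s, f i) = ∑ i ∈ s, X *ᵥ f i := by
  simp only [← Matrix.mulVecLin_apply]
  exact map_sum _ f s

lemma add_cancel3 {M : Type*} [AddCommGroup M] [Module (ZMod 2) M] (x y z : M) :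
    (x + (y + z)) + z = x + y := by
  rw [add_assoc, add_assoc, addself, add_zero]

lemma L_Ebase_aux (w : ℕ) (a : Fin w → ZMod 2) (hw : 4 ≤ w) (ha : a ⟨0, Nat.lt_of_lt_of_le (by norm_num) hw⟩ = 1) :
    ∀ d, d ≤ w - 2 → Ee w (w - 1 - d) =
      uu w a (d + 1) + ∑ i ∈ Finset.range d, Aa w a (w - d + i) • uu w a (i + 1) := by
  intro d
  induction d with
  | zero =>
    intro _
    rw [Finset.range_zero, Finset.sum_empty, add_zero, show (0:ℕ) + 1 = 1 from rfl,
      uu_one w a hw ha, show w - 1 - 0 = w - 1 from rfl]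
  | succ d IH =>
    intro hd
    have IH' := IH (by omega)
    have e1 : mtB w a *ᵥ Ee w (w - 1 - d) =
        Ee w (w - 2 - d) + Aa w a (w - 1 - d) • Ee w (w - 1) := by
      have := B_step2 w a hw (w - 2 - d) (by omega) (by omega)
      rw [show w - 2 - d + 1 = w - 1 - d from by omega] at this
      exact this
    have e2 : Ee w (w - 2 - d) = mtB w a *ᵥ Ee w (w - 1 - d) + Aa w a (w - 1 - d) • Ee w (w - 1) := by
      rw [e1, add_assoc, addself, add_zero]
    have e4 : mtB w a *ᵥ (∑ i ∈ Finset.range d, Aa w a (w - d + i) • uu w a (i + 1))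
        = ∑ i ∈ Finset.range d, Aa w a (w - d + i) • uu w a (i + 1 + 1) := by
      rw [mulVec_sum]
      apply Finset.sum_congr rfl
      intro i _
      rw [Matrix.mulVec_smul, ← uu_succ]
    rw [show w - 1 - (d + 1) = w - 2 - d from by omega, e2, IH', Matrix.mulVec_add, e4,
      ← uu_succ]
    rw [Finset.sum_range_succ']
    simp only [add_zero, zero_add]
    rw [show w - (d + 1) = w - 1 - d from by omega, uu_one w a hw ha, add_assoc]
    congr 1
    congr 1
    apply Finset.sum_congr rfl
    intro i _
    rw [show w - 1 - d + (i + 1) = w - d + i from by omega]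

lemma L_Ebase (w : ℕ) (a : Fin w → ZMod 2) (hw : 4 ≤ w) (ha : a ⟨0, Nat.lt_of_lt_of_le (by norm_num) hw⟩ = 1)
    (l : ℕ) (h1 : 1 ≤ l) (h2 : l ≤ w - 1) :
    Ee w l = uu w a (w - l) +
      ∑ i ∈ Finset.range (w - 1 - l), Aa w a (l + 1 + i) • uu w a (1 + i) := by
  have := L_Ebase_aux w a hw ha (w - 1 - l) (by omega)
  rw [show w - 1 - (w - 1 - l) = l from by omega, show w - 1 - l + 1 = w - l from by omega] at this
  rw [this]
  congr 1
  apply Finset.sum_congr rfl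
  intro i _
  rw [show w - (w - 1 - l) + i = l + 1 + i from by omega, show i + 1 = 1 + i from by omega]

lemma L_uuexp (w : ℕ) (a : Fin w → ZMod 2) (hw : 4 ≤ w) (ha : a ⟨0, Nat.lt_of_lt_of_le (by norm_num) hw⟩ = 1)
    (l : ℕ) (hl : 1 ≤ l) : ∀ m, l + m ≤ w - 1 →
    (mtB w a) ^ m *ᵥ Ee w (l + m) = uu w a (w - l) +
      ∑ i ∈ Finset.range (w - 1 - l - m), Aa w a (l + m + 1 + i) • uu w a (m + 1 + i) := by
  intro m
  induction m with
  | zero =>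
    intro hm
    rw [pow_zero, Matrix.one_mulVec]
    simpa using L_Ebase w a hw ha l hl (by omega)
  | succ m IH =>
    intro hm
    have hm' : l + m ≤ w - 1 := by omega
    have e1 : mtB w a *ᵥ Ee w (l + (m + 1)) =
        Ee w (l + m) + Aa w a (l + m + 1) • Ee w (w - 1) := by
      have := B_step2 w a hw (l + m) (by omega) (by omega)
      rw [show l + (m + 1) = l + m + 1 from rfl]
      exact this
    have e2 : (mtB w a) ^ m *ᵥ Ee w (w - 1) = uu w a (m + 1) := by
      rw [← uu_one w a hw ha, pow_mulVec_uu]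
    rw [pow_succ, ← Matrix.mulVec_mulVec, e1, Matrix.mulVec_add, Matrix.mulVec_smul,
      IH hm', e2]
    have hn : w - 1 - l - m = (w - 1 - l - (m + 1)) + 1 := by omega
    rw [hn, Finset.sum_range_succ']
    simp only [add_zero]
    rw [add_cancel3]
    congr 1
    apply Finset.sum_congr rfl
    intro i _
    rw [show l + m + 1 + (i + 1) = l + (m + 1) + 1 + i from by omega,
        show m + 1 + (i + 1) = m + 1 + 1 + i from by omega]

lemma L_diag (w : ℕ) (a : Fin w → ZMod 2) (hw : 4 ≤ w) (ha : a ⟨0, Nat.lt_of_lt_of_le (by norm_num) hw⟩ = 1) :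
    ∀ j, 1 ≤ j → j ≤ w - 1 → (mtB w a) ^ j *ᵥ Ee w j =
      ∑ i ∈ Finset.range j, Aa w a (i + 1) • uu w a (i + 1) := by
  intro j hj
  induction j, hj using Nat.le_induction with
  | base =>
    intro _
    rw [pow_one, B_step1 w a hw, Finset.sum_range_one, uu_one w a hw ha]
  | succ j hj IH =>
    intro hj1
    have e2 : (mtB w a) ^ j *ᵥ Ee w (w - 1) = uu w a (j + 1) := by
      rw [← uu_one w a hw ha, pow_mulVec_uu]
    rw [pow_succ, ← Matrix.mulVec_mulVec, B_step2 w a hw j hj (by omega), Matrix.mulVec_add,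
      Matrix.mulVec_smul, IH (by omega), e2, Finset.sum_range_succ]

lemma L_low (w : ℕ) (a : Fin w → ZMod 2) (hw : 4 ≤ w) (ha : a ⟨0, Nat.lt_of_lt_of_le (by norm_num) hw⟩ = 1)
    (j m : ℕ) (h1 : 1 ≤ j) (h2 : j ≤ m) (h3 : m ≤ w - 2) :
    (mtB w a) ^ m *ᵥ Ee w j =
      ∑ i ∈ Finset.range j, Aa w a (i + 1) • uu w a (m - j + 1 + i) := by
  have hp : (mtB w a) ^ m = (mtB w a) ^ (m - j) * (mtB w a) ^ j := by
    rw [← pow_add]; congr 1; omega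
  rw [hp, ← Matrix.mulVec_mulVec, L_diag w a hw ha j h1 (by omega), mulVec_sum]
  apply Finset.sum_congr rfl
  intro i _
  rw [Matrix.mulVec_smul, pow_mulVec_uu, show m - j + (i + 1) = m - j + 1 + i from by omega]

lemma sum_mulVec' {w : ℕ} {ι : Type*} {s : Finset ι} {f : ι → Matrix (Fin w) (Fin w) (ZMod 2)}
    {v : Fin w → ZMod 2} : (∑ i ∈ s, f i) *ᵥ v = ∑ i ∈ s, f i *ᵥ v := by
  classical
  induction s using Finset.induction_on with
  | empty => simp [Matrix.zero_mulVec]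
  | insert _ _ ha IH =>
    rw [Finset.sum_insert ha, Finset.sum_insert ha, Matrix.add_mulVec, IH]

lemma L_coord1 (w : ℕ) (a : Fin w → ZMod 2) (hw : 4 ≤ w) (ha : a ⟨0, Nat.lt_of_lt_of_le (by norm_num) hw⟩ = 1)
    (n j : ℕ) (hn : n ≤ w - 3) (hj : j ≤ w - 1) :
    ((mtB w a) ^ n *ᵥ Ee w j) ⟨1, by omega⟩ = if j = n + 1 then 1 else 0 := by
  rcases Nat.eq_zero_or_pos j with hj0 | hj0
  · -- j = 0
    subst hj0
    have : (mtB w a) ^ n *ᵥ Ee w 0 = uu w a n := rfl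
    rw [this, if_neg (by omega)]
    rcases Nat.eq_zero_or_pos n with hn0 | hn0
    · subst hn0
      rw [uu_zero]
      simp [Ee]
    · exact (uu_coord w a hw ha n hn0 (by omega) ⟨1, by omega⟩).1 (by show 1 + n < w; omega)
  · rcases le_or_gt j n with hjn | hjn
    · -- 1 ≤ j ≤ n
      rw [L_low w a hw ha j n hj0 hjn (by omega), if_neg (by omega)]
      rw [Finset.sum_apply]
      apply Finset.sum_eq_zero
      intro i hi
      have hi' := Finset.mem_range.1 hi
      rw [Pi.smul_apply, (uu_coord w a hw ha (n - j + 1 + i) (by omega) (by omega)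
        ⟨1, by omega⟩).1 (by show 1 + (n - j + 1 + i) < w; omega), smul_zero]
    · -- j ≥ n + 1
      set l := j - n with hl
      have hl1 : 1 ≤ l := by omega
      have hje : j = l + n := by omega
      rw [hje, L_uuexp w a hw ha l hl1 n (by omega)]
      rw [Pi.add_apply, Finset.sum_apply]
      have hzero : ∀ i ∈ Finset.range (w - 1 - l - n),
          (Aa w a (l + n + 1 + i) • uu w a (n + 1 + i)) ⟨1, by omega⟩ = 0 := by
        intro i hi
        have hi' := Finset.mem_range.1 hi
        rw [Pi.smul_apply, (uu_coord w a hw ha (n + 1 + i) (by omega) (by omega)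
          ⟨1, by omega⟩).1 (by show 1 + (n + 1 + i) < w; omega), smul_zero]
      rw [Finset.sum_eq_zero hzero, add_zero]
      rcases Nat.eq_or_lt_of_le hl1 with hl2 | hl2
      · rw [if_pos (by omega)]
        exact (uu_coord w a hw ha (w - l) (by omega) (by omega) ⟨1, by omega⟩).2
          (by show 1 + (w - l) = w; omega)
      · rw [if_neg (by omega)]
        exact (uu_coord w a hw ha (w - l) (by omega) (by omega) ⟨1, by omega⟩).1
          (by show 1 + (w - l) < w; omega)

lemma L_C (w : ℕ) (hw : 4 ≤ w) (x : Fin w → ZMod 2) :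
    mtC w *ᵥ x = x ⟨1, by omega⟩ • Ee w 0 := by
  funext i
  simp only [Matrix.mulVec, dotProduct, Pi.smul_apply, smul_eq_mul, Ee]
  by_cases hi : (i : ℕ) = 0
  · rw [Finset.sum_eq_single (⟨1, by omega⟩ : Fin w)]
    · simp [mtC, hi, mul_comm]
    · intro b _ hb
      simp only [mtC, Matrix.of_apply]
      rw [if_neg, zero_mul]
      rintro ⟨-, h2⟩
      exact hb (Fin.ext h2)
    · simp
  · rw [if_neg hi, mul_zero]
    apply Finset.sum_eq_zero
    intro b _
    simp only [mtC, Matrix.of_apply]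
    rw [if_neg (by rintro ⟨h1, -⟩; exact hi h1), zero_mul]

lemma L_Q (w : ℕ) (a : Fin w → ZMod 2) (hw : 4 ≤ w) (ha : a ⟨0, Nat.lt_of_lt_of_le (by norm_num) hw⟩ = 1)
    (m j : ℕ) (hm : 1 ≤ m) (hm2 : m ≤ w - 2) (hj : j ≤ w - 1) :
    mtQ w a m *ᵥ Ee w j = if 1 ≤ j ∧ j ≤ m then uu w a (m - j) else 0 := by
  have hterm : ∀ i ∈ Finset.range m,
      ((mtB w a) ^ i * mtC w * (mtB w a) ^ (m - 1 - i)) *ᵥ Ee w j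
        = (if j = m - i then (1 : ZMod 2) else 0) • uu w a i := by
    intro i hi
    have hi' := Finset.mem_range.1 hi
    rw [← Matrix.mulVec_mulVec, ← Matrix.mulVec_mulVec,
      L_C w hw ((mtB w a) ^ (m - 1 - i) *ᵥ Ee w j), Matrix.mulVec_smul,
      L_coord1 w a hw ha (m - 1 - i) j (by omega) hj,
      show m - 1 - i + 1 = m - i from by omega]
    have : mtB w a ^ i *ᵥ Ee w 0 = uu w a i := rfl
    rw [this]
  have hQ : mtQ w a m *ᵥ Ee w j
      = ∑ i ∈ Finset.range m, (if j = m - i then (1 : ZMod 2) else 0) • uu w a i := by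
    rw [mtQ, ← Finset.sum_congr rfl hterm, sum_mulVec']
  rw [hQ]
  by_cases hc : 1 ≤ j ∧ j ≤ m
  · rw [if_pos hc]
    rw [Finset.sum_eq_single (m - j)]
    · rw [if_pos (by omega), one_smul]
    · intro b hb hbj
      have hb' := Finset.mem_range.1 hb
      rw [if_neg (by omega), zero_smul]
    · intro hmem
      exact absurd (Finset.mem_range.2 (by omega)) hmem
  · rw [if_neg hc]
    apply Finset.sum_eq_zero
    intro i hi
    have hi' := Finset.mem_range.1 hi
    rw [if_neg (by omega), zero_smul]

lemma char2_move {M : Type*} [AddCommGroup M] [Module (ZMod 2) M] {x y S : M}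
    (h : x + y = S) : x = y + S := by
  rw [← h, add_comm x y, ← add_assoc, addself, zero_add]

def topL (w : ℕ) : (Fin w → ZMod 2) →ₗ[ZMod 2] ((Fin w ⊕ Fin w) → ZMod 2) where
  toFun x := Sum.elim x 0
  map_add' x y := by funext r; cases r <;> simp
  map_smul' c x := by funext r; cases r <;> simp

def botL (w : ℕ) : (Fin w → ZMod 2) →ₗ[ZMod 2] ((Fin w ⊕ Fin w) → ZMod 2) where
  toFun y := Sum.elim 0 y
  map_add' x y := by funext r; cases r <;> simp
  map_smul' c x := by funext r; cases r <;> simp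

lemma elim_decomp (w : ℕ) (x y : Fin w → ZMod 2) :
    Sum.elim x y = topL w x + botL w y := by
  funext r; cases r <;> simp [topL, botL]

def projT (w : ℕ) : ((Fin w ⊕ Fin w) → ZMod 2) →ₗ[ZMod 2] (Fin w → ZMod 2) :=
  LinearMap.funLeft _ _ Sum.inl

def projB (w : ℕ) : ((Fin w ⊕ Fin w) → ZMod 2) →ₗ[ZMod 2] (Fin w → ZMod 2) :=
  LinearMap.funLeft _ _ Sum.inr

lemma projT_elim (w : ℕ) (x y : Fin w → ZMod 2) : projT w (Sum.elim x y) = x := rfl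
lemma projB_elim (w : ℕ) (x y : Fin w → ZMod 2) : projB w (Sum.elim x y) = y := rfl

/-- The spanning family. -/
def famF (w s t : ℕ) (a : Fin w → ZMod 2) : (Fin (w - 2^s) ⊕ Fin (2^t)) → ((Fin w ⊕ Fin w) → ZMod 2)
  | Sum.inl q => Sum.elim (uu w a (2^s + (q:ℕ))) 0
  | Sum.inr r => Sum.elim ((mtB w a)^(2^t) *ᵥ Ee w (2^t - (r:ℕ))) (uu w a (r:ℕ))


lemma famF_indep (w : ℕ) (a : Fin w → ZMod 2) (hw : 4 ≤ w) (ha : a ⟨0, Nat.lt_of_lt_of_le (by norm_num) hw⟩ = 1)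
    (s t : ℕ) (hst : s < t) (ht : 2 ^ t ≤ w - 2) :
    LinearIndependent (ZMod 2) (famF w s t a) := by
  have h2st : 2^s ≤ 2^t := Nat.pow_le_pow_right (by norm_num) hst.le
  have h2s1 : 1 ≤ 2^s := Nat.one_le_two_pow
  rw [Fintype.linearIndependent_iff]
  intro g hg
  -- bottom components
  have hb : ∑ r : Fin (2^t), g (Sum.inr r) • uu w a (r:ℕ) = 0 := by
    have h2 := congrArg (projB w) hg
    rw [map_sum, map_zero, Fintype.sum_sum_type] at h2
    have hz1 : ∑ q : Fin (w - 2^s), projB w (g (Sum.inl q) • famF w s t a (Sum.inl q)) = 0 :=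
      Finset.sum_eq_zero fun q _ => by
        rw [_root_.map_smul, show famF w s t a (Sum.inl q)
          = Sum.elim (uu w a (2^s + (q:ℕ))) 0 from rfl, projB_elim, smul_zero]
    rw [hz1, zero_add] at h2
    calc ∑ r : Fin (2^t), g (Sum.inr r) • uu w a (r:ℕ)
        = ∑ r : Fin (2^t), projB w (g (Sum.inr r) • famF w s t a (Sum.inr r)) := by
          apply Finset.sum_congr rfl
          intro r _
          rw [_root_.map_smul, show famF w s t a (Sum.inr r)
            = Sum.elim ((mtB w a)^(2^t) *ᵥ Ee w (2^t - (r:ℕ))) (uu w a (r:ℕ)) from rfl, projB_elim]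
      _ = 0 := h2
  have hbz : ∀ r : Fin (2^t), g (Sum.inr r) = 0 := by
    have key := uindep w a hw ha (fun n => if h : n < 2^t then g (Sum.inr ⟨n, h⟩) else 0) ?_
    · intro r
      have h3 : (if h : (r:ℕ) < 2^t then g (Sum.inr ⟨(r:ℕ), h⟩) else 0) = 0 :=
        key (r:ℕ) (by have := r.isLt; omega)
      rwa [dif_pos r.isLt, Fin.eta] at h3
    · rw [← Finset.sum_subset (Finset.range_subset_range.2 (show 2^t ≤ w by omega))
        (fun x _ hnx => by
          have hx2 : ¬ (x < 2^t) := by simpa using hnx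
          show (if h : x < 2^t then g (Sum.inr ⟨x, h⟩) else 0) • uu w a x = 0
          rw [dif_neg hx2, zero_smul]),
        ← Fin.sum_univ_eq_sum_range]
      rw [← hb]
      apply Finset.sum_congr rfl
      intro r _
      show (if h : (r:ℕ) < 2^t then g (Sum.inr ⟨(r:ℕ), h⟩) else 0) • uu w a (r:ℕ) = _
      rw [dif_pos r.isLt, Fin.eta]
  -- top components
  have ht0 : ∑ q : Fin (w - 2^s), g (Sum.inl q) • uu w a (2^s + (q:ℕ)) = 0 := by
    have h2 := congrArg (projT w) hg
    rw [map_sum, map_zero, Fintype.sum_sum_type] at h2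
    have hz2 : ∑ r : Fin (2^t), projT w (g (Sum.inr r) • famF w s t a (Sum.inr r)) = 0 :=
      Finset.sum_eq_zero fun r _ => by rw [hbz r, zero_smul, map_zero]
    rw [hz2, add_zero] at h2
    calc ∑ q : Fin (w - 2^s), g (Sum.inl q) • uu w a (2^s + (q:ℕ))
        = ∑ q : Fin (w - 2^s), projT w (g (Sum.inl q) • famF w s t a (Sum.inl q)) := by
          apply Finset.sum_congr rfl
          intro q _
          rw [_root_.map_smul, show famF w s t a (Sum.inl q)
            = Sum.elim (uu w a (2^s + (q:ℕ))) 0 from rfl, projT_elim]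
      _ = 0 := h2
  have htz : ∀ q : Fin (w - 2^s), g (Sum.inl q) = 0 := by
    have key := uindep w a hw ha
      (fun n => if h : 2^s ≤ n ∧ n < w then g (Sum.inl ⟨n - 2^s, by omega⟩) else 0) ?_
    · intro q
      have hqw : 2^s + (q:ℕ) < w := by have := q.isLt; omega
      have hcond : 2^s ≤ 2^s + (q:ℕ) ∧ 2^s + (q:ℕ) < w := ⟨by omega, hqw⟩
      have h3 : (if h : 2^s ≤ 2^s + (q:ℕ) ∧ 2^s + (q:ℕ) < w then
          g (Sum.inl ⟨2^s + (q:ℕ) - 2^s, by omega⟩) else 0) = 0 := key (2^s + (q:ℕ)) hqw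
      rw [dif_pos hcond] at h3
      rwa [show (⟨2^s + (q:ℕ) - 2^s, by omega⟩ : Fin (w - 2^s)) = q from
        Fin.ext (show 2^s + (q:ℕ) - 2^s = (q:ℕ) by omega)] at h3
    · have hsub : Finset.Ico (2^s) w ⊆ Finset.range w := fun x hx =>
        Finset.mem_range.2 (Finset.mem_Ico.1 hx).2
      rw [← Finset.sum_subset hsub (fun x hx hnx => by
        have hx2 : ¬ (2^s ≤ x ∧ x < w) := fun hcon => hnx (Finset.mem_Ico.2 hcon)
        show (if h : 2^s ≤ x ∧ x < w then g (Sum.inl ⟨x - 2^s, by omega⟩) else 0) • uu w a x = 0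
        rw [dif_neg hx2, zero_smul])]
      rw [Finset.sum_Ico_eq_sum_range, ← Fin.sum_univ_eq_sum_range]
      rw [← ht0]
      apply Finset.sum_congr rfl
      intro q _
      have hqw : 2^s + (q:ℕ) < w := by have := q.isLt; omega
      have hcond : 2^s ≤ 2^s + (q:ℕ) ∧ 2^s + (q:ℕ) < w := ⟨by omega, hqw⟩
      show (if h : 2^s ≤ 2^s + (q:ℕ) ∧ 2^s + (q:ℕ) < w then
          g (Sum.inl ⟨2^s + (q:ℕ) - 2^s, by omega⟩) else 0) • uu w a (2^s + (q:ℕ)) = _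
      rw [dif_pos hcond, show (⟨2^s + (q:ℕ) - 2^s, by omega⟩ : Fin (w - 2^s)) = q from
        Fin.ext (show 2^s + (q:ℕ) - 2^s = (q:ℕ) by omega)]
  intro x
  cases x with
  | inl q => exact htz q
  | inr r => exact hbz r


/-- The block matrix of the statement. -/
def bigA (w s t : ℕ) (a : Fin w → ZMod 2) :
    Matrix (Fin w ⊕ Fin w) (Fin (t - s + 1) × Fin w) (ZMod 2) :=
  Matrix.of fun (r : Fin w ⊕ Fin w) (c : Fin (t - s + 1) × Fin w) =>
    Sum.elim (fun i => ((mtB w a) ^ (2 ^ (s + (c.1 : ℕ)))) i c.2)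
             (fun i => (mtQ w a (2 ^ (s + (c.1 : ℕ)))) i c.2) r

lemma bigA_col (w s t : ℕ) (a : Fin w → ZMod 2) (k : Fin (t - s + 1)) (jf : Fin w) :
    (bigA w s t a)ᵀ (k, jf) =
      Sum.elim ((mtB w a) ^ (2 ^ (s + (k:ℕ))) *ᵥ Ee w (jf:ℕ))
               (mtQ w a (2 ^ (s + (k:ℕ))) *ᵥ Ee w (jf:ℕ)) := by
  funext rr
  cases rr with
  | inl ii =>
    show bigA w s t a (Sum.inl ii) (k, jf) = _
    rw [bigA, Matrix.of_apply, Sum.elim_inl, Sum.elim_inl, col_apply]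
  | inr ii =>
    show bigA w s t a (Sum.inr ii) (k, jf) = _
    rw [bigA, Matrix.of_apply, Sum.elim_inr, Sum.elim_inr, col_apply]

lemma span_le_famF (w : ℕ) (a : Fin w → ZMod 2) (hw : 4 ≤ w) (ha : a ⟨0, Nat.lt_of_lt_of_le (by norm_num) hw⟩ = 1)
    (s t : ℕ) (hst : s < t) (ht : 2 ^ t ≤ w - 2) :
    Submodule.span (ZMod 2) (Set.range (bigA w s t a)ᵀ)
      ≤ Submodule.span (ZMod 2) (Set.range (famF w s t a)) := by
  have h2st : 2^s ≤ 2^t := Nat.pow_le_pow_right (by norm_num) hst.le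
  have h2s1 : 1 ≤ 2^s := Nat.one_le_two_pow
  -- basic top membership
  have htopmem : ∀ p, 2^s ≤ p → p < w →
      Sum.elim (uu w a p) 0 ∈ Submodule.span (ZMod 2) (Set.range (famF w s t a)) := by
    intro p h1 h2
    apply Submodule.subset_span
    refine ⟨Sum.inl ⟨p - 2^s, by omega⟩, ?_⟩
    show Sum.elim (uu w a (2^s + (p - 2^s))) 0 = _
    rw [show 2^s + (p - 2^s) = p from by omega]
  rw [Submodule.span_le]
  rintro _ ⟨⟨k, jf⟩, rfl⟩
  rw [SetLike.mem_coe, bigA_col]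
  set m := 2 ^ (s + (k:ℕ)) with hmdef
  have hm1 : 2^s ≤ m := Nat.pow_le_pow_right (by norm_num) (by omega)
  have hm2 : m ≤ 2^t := Nat.pow_le_pow_right (by norm_num) (by have := k.isLt; omega)
  have hm0 : 1 ≤ m := Nat.one_le_two_pow
  set j := (jf : ℕ) with hjdef
  have hjw : j < w := jf.isLt
  rcases Nat.eq_zero_or_pos j with hj0 | hj0
  · -- j = 0 : column is (u_m, 0)
    rw [hj0, L_Q w a hw ha m 0 hm0 (by omega) (by omega), if_neg (by omega)]
    have : (mtB w a) ^ m *ᵥ Ee w 0 = uu w a m := rfl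
    rw [this]
    exact htopmem m hm1 (by omega)
  rcases le_or_gt j m with hjm | hjm
  · -- 1 ≤ j ≤ m
    set r := m - j with hrdef
    have hrlt : r < 2^t := by omega
    have htop : (mtB w a) ^ m *ᵥ Ee w j + (mtB w a) ^ (2^t) *ᵥ Ee w (2^t - r)
        = ∑ i ∈ Finset.Ico j (2^t - r), Aa w a (i+1) • uu w a (r + 1 + i) := by
      rw [L_low w a hw ha j m hj0 hjm (by omega),
          L_low w a hw ha (2^t - r) (2^t) (by omega) (by omega) (by omega)]
      rw [Finset.sum_congr rfl (fun i (_ : i ∈ Finset.range j) =>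
        show Aa w a (i+1) • uu w a (m - j + 1 + i) = Aa w a (i+1) • uu w a (r+1+i) from by
          rw [show m - j + 1 + i = r + 1 + i from by omega])]
      rw [Finset.sum_congr rfl (fun i (_ : i ∈ Finset.range (2^t - r)) =>
        show Aa w a (i+1) • uu w a (2^t - (2^t - r) + 1 + i) = Aa w a (i+1) • uu w a (r+1+i) from by
          rw [show 2^t - (2^t - r) + 1 + i = r + 1 + i from by omega])]
      have hsplit : (∑ i ∈ Finset.range j, Aa w a (i+1) • uu w a (r+1+i))
          + ∑ i ∈ Finset.Ico j (2^t - r), Aa w a (i+1) • uu w a (r+1+i)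
          = ∑ i ∈ Finset.range (2^t - r), Aa w a (i+1) • uu w a (r+1+i) := by
        rw [Finset.range_eq_Ico, Finset.range_eq_Ico]
        exact Finset.sum_Ico_consecutive (fun i => Aa w a (i+1) • uu w a (r+1+i)) (m := 0) (n := j) (k := 2^t - r)
          (by omega) (by omega)
      rw [← hsplit, ← add_assoc, addself, zero_add]
    have hxy : (mtB w a) ^ m *ᵥ Ee w j = (mtB w a) ^ (2^t) *ᵥ Ee w (2^t - r)
        + ∑ i ∈ Finset.Ico j (2^t - r), Aa w a (i+1) • uu w a (r + 1 + i) := char2_move htop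
    have hbot : mtQ w a m *ᵥ Ee w j = uu w a r := by
      rw [L_Q w a hw ha m j hm0 (by omega) (by omega), if_pos ⟨hj0, hjm⟩]
    have hcoleq : Sum.elim ((mtB w a) ^ m *ᵥ Ee w j) (mtQ w a m *ᵥ Ee w j)
        = famF w s t a (Sum.inr ⟨r, hrlt⟩)
          + topL w (∑ i ∈ Finset.Ico j (2^t - r), Aa w a (i+1) • uu w a (r + 1 + i)) := by
      rw [hbot, elim_decomp, hxy, map_add]
      rw [show famF w s t a (Sum.inr ⟨r, hrlt⟩)
        = topL w ((mtB w a) ^ (2^t) *ᵥ Ee w (2^t - r)) + botL w (uu w a r) from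
          elim_decomp w _ _]
      abel
    rw [hcoleq]
    apply Submodule.add_mem
    · exact Submodule.subset_span ⟨Sum.inr ⟨r, hrlt⟩, rfl⟩
    · rw [map_sum]
      apply Submodule.sum_mem
      intro i hi
      have hi' := Finset.mem_Ico.1 hi
      rw [_root_.map_smul]
      exact Submodule.smul_mem _ _ (htopmem (r+1+i) (by omega) (by omega))
  · -- j > m
    set l := j - m with hldef
    have hl1 : 1 ≤ l := by omega
    have hbot : mtQ w a m *ᵥ Ee w j = 0 := by
      rw [L_Q w a hw ha m j hm0 (by omega) (by omega), if_neg (by omega)]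
    have hxe : (mtB w a) ^ m *ᵥ Ee w j = uu w a (w - l)
        + ∑ i ∈ Finset.range (w - 1 - l - m), Aa w a (j+1+i) • uu w a (m+1+i) := by
      have := L_uuexp w a hw ha l hl1 m (by omega)
      rwa [show l + m = j from by omega] at this
    rw [hbot]
    show topL w ((mtB w a) ^ m *ᵥ Ee w j) ∈ _
    rw [hxe, map_add, map_sum]
    apply Submodule.add_mem
    · exact htopmem (w - l) (by omega) (by omega)
    · apply Submodule.sum_mem
      intro i hi
      have hi' := Finset.mem_range.1 hi
      rw [_root_.map_smul]
      exact Submodule.smul_mem _ _ (htopmem (m+1+i) (by omega) (by omega))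

lemma famF_le_span (w : ℕ) (a : Fin w → ZMod 2) (hw : 4 ≤ w) (ha : a ⟨0, Nat.lt_of_lt_of_le (by norm_num) hw⟩ = 1)
    (s t : ℕ) (hst : s < t) (ht : 2 ^ t ≤ w - 2) :
    Submodule.span (ZMod 2) (Set.range (famF w s t a))
      ≤ Submodule.span (ZMod 2) (Set.range (bigA w s t a)ᵀ) := by
  have h2st : 2^s ≤ 2^t := Nat.pow_le_pow_right (by norm_num) hst.le
  have h2s1 : 1 ≤ 2^s := Nat.one_le_two_pow
  have h2s1' : 2^s ≤ w - 2 := le_trans h2st ht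
  -- strong induction claim for top vectors
  have claim : ∀ p, p < w → 2^s ≤ p →
      Sum.elim (uu w a p) 0 ∈ Submodule.span (ZMod 2) (Set.range (bigA w s t a)ᵀ) := by
    intro p
    induction p using Nat.strong_induction_on with
    | _ p IH =>
      intro hpw hps
      rcases Nat.eq_or_lt_of_le hps with hp0 | hp0
      · -- p = 2^s, use column (0, 0)
        have h1 := bigA_col w s t a ⟨0, by omega⟩ ⟨0, by omega⟩
        rw [show s + ((⟨0, by omega⟩ : Fin (t - s + 1)) : ℕ) = s from rfl] at h1
        rw [show ((⟨0, by omega⟩ : Fin w) : ℕ) = 0 from rfl] at h1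
        rw [L_Q w a hw ha (2^s) 0 Nat.one_le_two_pow (by omega) (by omega),
          if_neg (by omega)] at h1
        apply Submodule.subset_span
        refine ⟨(⟨0, by omega⟩, ⟨0, by omega⟩), ?_⟩
        rw [h1, ← hp0]
        rfl
      · -- p > 2^s
        set l := w - p with hldef
        have hl1 : 1 ≤ l := by omega
        have hjw : 2^s + l < w := by omega
        have h1 := bigA_col w s t a ⟨0, by omega⟩ ⟨2^s + l, hjw⟩
        rw [show s + ((⟨0, by omega⟩ : Fin (t - s + 1)) : ℕ) = s from rfl] at h1
        rw [show ((⟨2^s + l, hjw⟩ : Fin w) : ℕ) = 2^s + l from rfl] at h1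
        rw [L_Q w a hw ha (2^s) (2^s + l) Nat.one_le_two_pow (by omega) (by omega),
          if_neg (by omega)] at h1
        have hxe := L_uuexp w a hw ha l hl1 (2^s) (by omega)
        rw [show l + 2^s = 2^s + l from by omega, show w - l = p from by omega] at hxe
        have hS : uu w a p = (mtB w a) ^ (2^s) *ᵥ Ee w (2^s + l)
            + ∑ i ∈ Finset.range (w - 1 - l - 2^s), Aa w a (2^s+l+1+i) • uu w a (2^s+1+i) := by
          rw [hxe, add_assoc, addself, add_zero]
        show topL w (uu w a p) ∈ _
        rw [hS, map_add, map_sum]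
        apply Submodule.add_mem
        · apply Submodule.subset_span
          exact ⟨(⟨0, by omega⟩, ⟨2^s + l, hjw⟩), h1⟩
        · apply Submodule.sum_mem
          intro i hi
          have hi' := Finset.mem_range.1 hi
          rw [_root_.map_smul]
          exact Submodule.smul_mem _ _ (IH (2^s+1+i) (by omega) (by omega) (by omega))
  rw [Submodule.span_le]
  rintro _ ⟨x, rfl⟩
  rw [SetLike.mem_coe]
  cases x with
  | inl q =>
    exact claim (2^s + (q:ℕ)) (by have := q.isLt; omega) (by omega)
  | inr r =>
    have hrw : 2^t - (r:ℕ) < w := by omega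
    have h1 := bigA_col w s t a ⟨t - s, by omega⟩ ⟨2^t - (r:ℕ), hrw⟩
    rw [show s + ((⟨t - s, by omega⟩ : Fin (t - s + 1)) : ℕ) = t from by
      show s + (t - s) = t; omega] at h1
    rw [show ((⟨2^t - (r:ℕ), hrw⟩ : Fin w) : ℕ) = 2^t - (r:ℕ) from rfl] at h1
    rw [L_Q w a hw ha (2^t) (2^t - (r:ℕ)) (by omega) (by omega) (by omega),
      if_pos ⟨by have := r.isLt; omega, by omega⟩] at h1
    rw [show 2^t - (2^t - (r:ℕ)) = (r:ℕ) from by have := r.isLt; omega] at h1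
    apply Submodule.subset_span
    exact ⟨(⟨t - s, by omega⟩, ⟨2^t - (r:ℕ), hrw⟩), h1⟩

end Stmt12

/-- the `2w × (t-s+1)w` block matrix with block columns
`(B^{2^{s+k}}; Q_{2^{s+k}})`, `0 ≤ k ≤ t-s`, has rank `w + 2^t - 2^s`. -/
theorem stmt12 (w : ℕ) (hw : 4 ≤ w) (a : Fin w → ZMod 2) (ha : a ⟨0, by omega⟩ = 1)
    (s t : ℕ) (hst : s < t) (ht : 2 ^ t ≤ w - 2) :
    (Matrix.of fun (r : Fin w ⊕ Fin w) (c : Fin (t - s + 1) × Fin w) =>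
      Sum.elim (fun i => ((mtB w a) ^ (2 ^ (s + (c.1 : ℕ)))) i c.2)
               (fun i => (mtQ w a (2 ^ (s + (c.1 : ℕ)))) i c.2) r).rank
    = w + (2 ^ t - 2 ^ s) := by
  have h2st : 2^s ≤ 2^t := Nat.pow_le_pow_right (by norm_num) hst.le
  have h2s1 : 1 ≤ 2^s := Nat.one_le_two_pow
  have hA : (Matrix.of fun (r : Fin w ⊕ Fin w) (c : Fin (t - s + 1) × Fin w) =>
      Sum.elim (fun i => ((mtB w a) ^ (2 ^ (s + (c.1 : ℕ)))) i c.2)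
               (fun i => (mtQ w a (2 ^ (s + (c.1 : ℕ)))) i c.2) r) = Stmt12.bigA w s t a := rfl
  rw [hA, Matrix.rank_eq_finrank_span_cols]
  have hspan : Submodule.span (ZMod 2) (Set.range (Stmt12.bigA w s t a)ᵀ)
      = Submodule.span (ZMod 2) (Set.range (Stmt12.famF w s t a)) :=
    le_antisymm (Stmt12.span_le_famF w a hw ha s t hst ht)
      (Stmt12.famF_le_span w a hw ha s t hst ht)
  rw [show Set.range (Stmt12.bigA w s t a).col = Set.range (Stmt12.bigA w s t a)ᵀ from rfl,
    hspan, finrank_span_eq_card (Stmt12.famF_indep w a hw ha s t hst ht)]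
  rw [Fintype.card_sum, Fintype.card_fin, Fintype.card_fin]
  omega
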